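/- Let f be holomorphic on the open unit disc D ⊂ ℂ with ∫_D |f|² dA < ∞ (where dA is Lebesgue area measure). Then for every z ∈ D, f(z) = (1/π) ∫_D f(w) / (1 − z·conj(w))² dA(w). -/

import Mathlib

open MeasureTheory Metric Complex Set Filter
open scoped NNReal ENNReal Topology

lemma rot_aux {k n : ℕ} (r : ℝ) (u : Circle) (hval : (u:ℂ) ^ k * (starRingEnd ℂ) (u:ℂ) ^ n = -1) :
    ∫ w in ball (0:ℂ) r, w ^ k * (starRingEnd ℂ) w ^ n = 0 := by
  have hmp := (rotation u).measurePreserving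
  have hemb := (rotation u).toHomeomorph.measurableEmbedding
  have hpre : (rotation u) ⁻¹' (ball (0:ℂ) r) = ball (0:ℂ) r := by
    ext w
    simp only [mem_preimage, mem_ball_zero_iff, rotation_apply, norm_mul, one_mul]
    rw [show ‖(u:ℂ)‖ = 1 from Circle.norm_coe u, one_mul]
  have key := hmp.setIntegral_preimage_emb hemb
      (fun w : ℂ => w ^ k * (starRingEnd ℂ) w ^ n) (ball (0:ℂ) r)
  rw [hpre] at key
  have : ∀ w : ℂ, (rotation u w) ^ k * (starRingEnd ℂ) (rotation u w) ^ n
      = -(w ^ k * (starRingEnd ℂ) w ^ n) := by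
    intro w
    simp only [rotation_apply, map_mul, mul_pow]
    linear_combination (w ^ k * (starRingEnd ℂ) w ^ n) * hval
  simp only [this, integral_neg] at key
  linear_combination (-1/2 : ℂ) * key

lemma monomial_integral_ne' {k n : ℕ} (hkn : k ≠ n) (r : ℝ) :
    ∫ w in ball (0:ℂ) r, w ^ k * (starRingEnd ℂ) w ^ n = 0 := by
  set θ : ℝ := Real.pi / ((k : ℝ) - n) with hθ
  set u : Circle := Circle.exp θ with hu
  have hkn' : (k : ℝ) - n ≠ 0 := sub_ne_zero.2 (by exact_mod_cast hkn)
  have hcoe : (u : ℂ) = Complex.exp (θ * Complex.I) := Circle.coe_exp θ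
  have hval : (u : ℂ) ^ k * (starRingEnd ℂ) (u : ℂ) ^ n = -1 := by
    rw [hcoe, ← Complex.exp_conj]
    simp only [map_mul, Complex.conj_I, Complex.conj_ofReal]
    rw [← Complex.exp_nat_mul, ← Complex.exp_nat_mul, ← Complex.exp_add]
    have : (k : ℂ) * (θ * Complex.I) + n * (θ * (-Complex.I)) = Real.pi * Complex.I := by
      have : ((k : ℂ) - n) * θ = Real.pi := by
        have : ((k : ℝ) - n) * θ = Real.pi := by rw [hθ]; field_simp
        exact_mod_cast congrArg Complex.ofReal this
      ring_nf
      ring_nf at this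
      linear_combination Complex.I * this
    rw [this, Complex.exp_pi_mul_I]
  exact rot_aux r u hval

lemma real_monomial_integral (n : ℕ) (r : ℝ) (hr : 0 < r) :
    ∫ w in ball (0:ℂ) r, ‖w‖ ^ (2*n) = Real.pi * r ^ (2*n+2) / (n+1) := by
  set F : ℝ → ℝ := (Iio r).indicator (fun y => y ^ (2*n)) with hF
  have h2 : ∫ w in ball (0:ℂ) r, ‖w‖ ^ (2*n) = ∫ w : ℂ, F ‖w‖ := by
    rw [← integral_indicator measurableSet_ball]
    congr 1
    ext w
    by_cases hw : w ∈ ball (0:ℂ) r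
    · rw [indicator_of_mem hw, hF,
        indicator_of_mem (show ‖w‖ ∈ Iio r from mem_ball_zero_iff.1 hw)]
    · rw [indicator_of_notMem hw, hF,
        indicator_of_notMem (show ‖w‖ ∉ Iio r from fun h => hw (mem_ball_zero_iff.2 h))]
  rw [h2, MeasureTheory.integral_fun_norm_addHaar volume F]
  have h3 : ∫ y in Ioi (0:ℝ), y ^ (Module.finrank ℝ ℂ - 1) • F y
      = ∫ y in Ioo (0:ℝ) r, y ^ (2*n+1) := by
    rw [Complex.finrank_real_complex]
    have : ∀ y : ℝ, y ^ (2-1) • F y = (Iio r).indicator (fun y => y ^ (2*n+1)) y := by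
      intro y
      by_cases hy : y ∈ Iio r <;>
        simp [hF, indicator_of_mem, indicator_of_notMem, hy, smul_eq_mul] <;> ring
    simp only [this]
    rw [setIntegral_indicator measurableSet_Iio, Set.Ioi_inter_Iio]
  rw [h3, Complex.finrank_real_complex]
  have h4 : ∫ y in Ioo (0:ℝ) r, y ^ (2*n+1) = (r ^ (2*n+2)) / (2*n+2) := by
    rw [← integral_Ioc_eq_integral_Ioo, ← intervalIntegral.integral_of_le hr.le,
      integral_pow]
    push_cast; ring
  rw [h4]
  have h5 : (volume (ball (0:ℂ) 1)).toReal = Real.pi := by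
    rw [Complex.volume_ball]
    simp [ENNReal.toReal_mul]
  rw [show volume.real (ball (0:ℂ) 1) = Real.pi from h5]
  simp only [nsmul_eq_mul, smul_eq_mul]
  field_simp
  ring

lemma monomial_integral_eq (n : ℕ) (r : ℝ) (hr : 0 < r) :
    ∫ w in ball (0:ℂ) r, w ^ n * (starRingEnd ℂ) w ^ n
      = ((Real.pi * r ^ (2*n+2) / (n+1) : ℝ) : ℂ) := by
  have h1 : ∀ w : ℂ, w ^ n * (starRingEnd ℂ) w ^ n = ((‖w‖ ^ (2*n) : ℝ) : ℂ) := by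
    intro w
    rw [← mul_pow, Complex.mul_conj]
    push_cast
    rw [Complex.normSq_eq_norm_sq]
    norm_cast
    rw [← pow_mul, mul_comm 2 n]
  simp only [h1]
  rw [← real_monomial_integral n r hr]
  exact integral_ofReal

lemma coeff_integral (f : ℂ → ℂ) (a : ℕ → ℂ)
    (hsum : ∀ y : ℂ, ‖y‖ < 1 → HasSum (fun k => a k * y ^ k) (f y))
    (hsummable : ∀ s : ℝ, 0 ≤ s → s < 1 → Summable (fun k => ‖a k‖ * s ^ k))
    {r : ℝ} (hr0 : 0 < r) (hr1 : r < 1) (n : ℕ) :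
    ∫ w in ball (0:ℂ) r, f w * (starRingEnd ℂ) w ^ n
      = a n * ((Real.pi * r ^ (2*n+2) / (n+1) : ℝ) : ℂ) := by
  set F : ℕ → ℂ → ℂ := fun k w => a k * (w ^ k * (starRingEnd ℂ) w ^ n) with hF
  have hFc : ∀ k, Continuous (F k) := by
    intro k
    exact continuous_const.mul ((continuous_pow k).mul
      ((Complex.continuous_conj.pow n)))
  have hFint : ∀ k, Integrable (F k) (volume.restrict (ball (0:ℂ) r)) := by
    intro k
    exact ((hFc k).continuousOn.integrableOn_compact (isCompact_closedBall _ _)).mono_set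
      ball_subset_closedBall
  have hFbound : ∀ k, ∫ w in ball (0:ℂ) r, ‖F k w‖
      ≤ ‖a k‖ * r ^ k * (r ^ n * (volume (ball (0:ℂ) r)).toReal) := by
    intro k
    have : ∀ w ∈ ball (0:ℂ) r, ‖F k w‖ ≤ ‖a k‖ * r ^ k * r ^ n := by
      intro w hw
      have hw' : ‖w‖ ≤ r := (mem_ball_zero_iff.1 hw).le
      have h0 : (0:ℝ) ≤ ‖w‖ := norm_nonneg w
      simp only [hF, norm_mul, norm_pow, RCLike.norm_conj]
      calc ‖a k‖ * (‖w‖ ^ k * ‖w‖ ^ n) ≤ ‖a k‖ * (r ^ k * r ^ n) := by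
            gcongr
        _ = ‖a k‖ * r ^ k * r ^ n := by ring
    calc ∫ w in ball (0:ℂ) r, ‖F k w‖
        ≤ ∫ _ in ball (0:ℂ) r, ‖a k‖ * r ^ k * r ^ n :=
          setIntegral_mono_on (hFint k).norm (integrableOn_const
            (measure_ball_lt_top.ne)) measurableSet_ball this
      _ = (volume (ball (0:ℂ) r)).toReal * (‖a k‖ * r ^ k * r ^ n) := by
          rw [setIntegral_const]; rfl
      _ = ‖a k‖ * r ^ k * (r ^ n * (volume (ball (0:ℂ) r)).toReal) := by ring
  have hFsumnorm : Summable (fun k => ∫ w in ball (0:ℂ) r, ‖F k w‖) := by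
    apply Summable.of_nonneg_of_le (fun k => integral_nonneg (fun w => norm_nonneg _)) hFbound
    exact ((hsummable r hr0.le hr1).mul_right _)
  have key := hasSum_integral_of_summable_integral_norm hFint hFsumnorm
  have htsum : ∀ w ∈ ball (0:ℂ) r, (∑' k, F k w) = f w * (starRingEnd ℂ) w ^ n := by
    intro w hw
    have hw1 : ‖w‖ < 1 := lt_trans (mem_ball_zero_iff.1 hw) hr1
    have := (hsum w hw1).mul_right ((starRingEnd ℂ) w ^ n)
    refine HasSum.tsum_eq ?_
    convert this using 2 with k
    · rfl
    simp [hF]; ring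
  rw [setIntegral_congr_fun measurableSet_ball htsum] at key
  have hterm : (fun k => ∫ w in ball (0:ℂ) r, F k w)
      = fun k => if k = n then a n * ((Real.pi * r ^ (2*n+2) / (n+1) : ℝ) : ℂ) else 0 := by
    funext k
    simp only [hF]
    rw [integral_const_mul]
    by_cases hkn : k = n
    · subst hkn
      rw [monomial_integral_eq k r hr0, if_pos rfl]
    · rw [monomial_integral_ne' hkn r, mul_zero, if_neg hkn]
  rw [hterm] at key
  exact key.unique (hasSum_ite_eq n _)

lemma ball_integral_eq (f : ℂ → ℂ) (a : ℕ → ℂ)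
    (hfc : ContinuousOn f (ball (0:ℂ) 1))
    (hsum : ∀ y : ℂ, ‖y‖ < 1 → HasSum (fun k => a k * y ^ k) (f y))
    (hsummable : ∀ s : ℝ, 0 ≤ s → s < 1 → Summable (fun k => ‖a k‖ * s ^ k))
    {r : ℝ} (hr0 : 0 < r) (hr1 : r < 1) {z : ℂ} (hz : ‖z‖ < 1) :
    ∫ w in ball (0:ℂ) r, f w / (1 - z * (starRingEnd ℂ) w) ^ 2
      = (Real.pi : ℂ) * r ^ 2 * f (z * r ^ 2) := by
  have hfc' : ContinuousOn f (closedBall (0:ℂ) r) :=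
    hfc.mono (closedBall_subset_ball hr1)
  have hfint : IntegrableOn f (ball (0:ℂ) r) :=
    (hfc'.integrableOn_compact (isCompact_closedBall _ _)).mono_set ball_subset_closedBall
  set G : ℕ → ℂ → ℂ := fun n w => ((n:ℂ)+1) * z ^ n * (f w * (starRingEnd ℂ) w ^ n) with hG
  have hGint : ∀ n, Integrable (G n) (volume.restrict (ball (0:ℂ) r)) := by
    intro n
    have : ContinuousOn (fun w => f w * (starRingEnd ℂ) w ^ n) (closedBall (0:ℂ) r) :=
      hfc'.mul (Complex.continuous_conj.pow n).continuousOn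
    exact (((this.integrableOn_compact (isCompact_closedBall _ _)).mono_set
      ball_subset_closedBall)).const_mul _
  have hnormf : (0:ℝ) ≤ ∫ w in ball (0:ℂ) r, ‖f w‖ := integral_nonneg fun w => norm_nonneg _
  have hGbound : ∀ n, ∫ w in ball (0:ℂ) r, ‖G n w‖
      ≤ ((n:ℝ)+1) * (‖z‖ * r) ^ n * ∫ w in ball (0:ℂ) r, ‖f w‖ := by
    intro n
    have hmono : ∀ w ∈ ball (0:ℂ) r, ‖G n w‖ ≤ ((n:ℝ)+1) * (‖z‖ * r) ^ n * ‖f w‖ := by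
      intro w hw
      have hw' : ‖w‖ ≤ r := (mem_ball_zero_iff.1 hw).le
      simp only [hG, norm_mul, norm_pow, RCLike.norm_conj]
      have h1 : ‖((n:ℂ)+1)‖ = (n:ℝ)+1 := by norm_cast
      rw [h1, mul_pow]
      calc ((n:ℝ)+1) * ‖z‖ ^ n * (‖f w‖ * ‖w‖ ^ n)
          ≤ ((n:ℝ)+1) * ‖z‖ ^ n * (‖f w‖ * r ^ n) := by
            gcongr
        _ = ((n:ℝ)+1) * (‖z‖ ^ n * r ^ n) * ‖f w‖ := by ring
    calc ∫ w in ball (0:ℂ) r, ‖G n w‖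
        ≤ ∫ w in ball (0:ℂ) r, ((n:ℝ)+1) * (‖z‖ * r) ^ n * ‖f w‖ := by
          exact setIntegral_mono_on (hGint n).norm (hfint.norm.const_mul _)
            measurableSet_ball hmono
      _ = ((n:ℝ)+1) * (‖z‖ * r) ^ n * ∫ w in ball (0:ℂ) r, ‖f w‖ := by
          rw [integral_const_mul]
  have hx : ‖z‖ * r < 1 := by nlinarith [norm_nonneg z]
  have hx' : ‖‖z‖ * r‖ < 1 := by
    rwa [Real.norm_of_nonneg (by positivity)]
  have hGsumnorm : Summable (fun n => ∫ w in ball (0:ℂ) r, ‖G n w‖) := by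
    apply Summable.of_nonneg_of_le (fun n => integral_nonneg fun w => norm_nonneg _) hGbound
    have hs1 : Summable (fun n : ℕ => ((n:ℝ))^1 * (‖z‖*r)^n) :=
      summable_pow_mul_geometric_of_norm_lt_one 1 hx'
    have hs2 : Summable (fun n : ℕ => (‖z‖*r)^n) := summable_geometric_of_norm_lt_one hx'
    have : Summable (fun n : ℕ => ((n:ℝ)+1) * (‖z‖ * r) ^ n) := by
      have := hs1.add hs2
      apply this.congr
      intro n; ring
    exact this.mul_right _
  have key := hasSum_integral_of_summable_integral_norm hGint hGsumnorm
  have htsum : ∀ w ∈ ball (0:ℂ) r, (∑' n, G n w) = f w / (1 - z * (starRingEnd ℂ) w) ^ 2 := by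
    intro w hw
    have hw' : ‖w‖ < r := mem_ball_zero_iff.1 hw
    set x : ℂ := z * (starRingEnd ℂ) w with hxdef
    have hxw : ‖x‖ < 1 := by
      rw [hxdef, norm_mul, RCLike.norm_conj]
      nlinarith [norm_nonneg z, norm_nonneg w]
    have hker : HasSum (fun n : ℕ => ((n:ℂ)+1) * x ^ n) (1/(1-x)^2) := by
      have h := hasSum_choose_mul_geometric_of_norm_lt_one 1 hxw
      have he : (fun n : ℕ => (((n+1).choose 1 : ℕ) : ℂ) * x ^ n)
          = fun n : ℕ => ((n:ℂ)+1) * x ^ n := by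
        funext m; rw [Nat.choose_one_right]; push_cast; ring
      rw [he] at h
      norm_num at h ⊢
      exact h
    have := hker.mul_left (f w)
    refine HasSum.tsum_eq (this.congr_fun ?_) |>.trans ?_
    · intro n
      simp only [hG, hxdef, mul_pow]
      ring
    · rw [mul_one_div]
  rw [setIntegral_congr_fun measurableSet_ball htsum] at key
  have hterm : (fun n => ∫ w in ball (0:ℂ) r, G n w)
      = fun n => (Real.pi : ℂ) * (r:ℂ) ^ 2 * (a n * (z * (r:ℂ) ^ 2) ^ n) := by
    funext n
    simp only [hG]
    rw [integral_const_mul, coeff_integral f a hsum hsummable hr0 hr1 n]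
    have hn : ((n:ℂ)+1) ≠ 0 := by
      have h2 : ((n:ℂ)+1) = ((n+1 : ℕ) : ℂ) := by push_cast; ring
      rw [h2]
      exact_mod_cast n.succ_ne_zero
    push_cast
    field_simp
    ring
  rw [hterm] at key
  have hz2 : ‖z * (r:ℂ) ^ 2‖ < 1 := by
    rw [norm_mul, norm_pow, Complex.norm_real, Real.norm_of_nonneg hr0.le]
    nlinarith [norm_nonneg z]
  have hrhs := (hsum (z * (r:ℂ)^2) hz2).mul_left ((Real.pi : ℂ) * (r:ℂ)^2)
  exact key.unique hrhs

/-- Reproducing property of the Bergman kernel of the unit disc: a square-integrable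
holomorphic function on the disc satisfies
`f(z) = π⁻¹ ∫_D f(w) / (1 − z·conj w)² dA(w)`. -/
theorem bergman_reproducing_disc (f : ℂ → ℂ)
    (hf : DifferentiableOn ℂ f (ball (0 : ℂ) 1))
    (hL2 : IntegrableOn (fun w => ‖f w‖ ^ 2) (ball (0 : ℂ) 1) volume)
    (z : ℂ) (hz : z ∈ ball (0 : ℂ) 1) :
    f z = (1 / Real.pi : ℂ) *
      ∫ w in ball (0 : ℂ) 1, f w / (1 - z * (starRingEnd ℂ) w) ^ 2 := by
  have hz1 : ‖z‖ < 1 := mem_ball_zero_iff.1 hz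
  -- power series
  obtain ⟨p, hp⟩ : ∃ p : FormalMultilinearSeries ℂ ℂ ℂ,
      ∀ r : NNReal, 0 < r → (r:ℝ) < 1 → HasFPowerSeriesOnBall f p 0 r := by
    set R0 : ℝ≥0 := 1/2 with hR0
    refine ⟨cauchyPowerSeries f 0 R0, fun r hr0 hr1 => ?_⟩
    have hsub : ∀ s : NNReal, (s:ℝ) < 1 → DifferentiableOn ℂ f (closedBall 0 (s:ℝ)) :=
      fun s hs => hf.mono (closedBall_subset_ball hs)
    have hhalf : HasFPowerSeriesOnBall f (cauchyPowerSeries f 0 R0) 0 R0 :=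
      (hsub R0 (by rw [hR0]; norm_num)).hasFPowerSeriesOnBall (by rw [hR0]; norm_num)
    have hr : HasFPowerSeriesOnBall f (cauchyPowerSeries f 0 r) 0 r :=
      (hsub r hr1).hasFPowerSeriesOnBall hr0
    rwa [hr.hasFPowerSeriesAt.eq_formalMultilinearSeries hhalf.hasFPowerSeriesAt] at hr
  set a : ℕ → ℂ := fun n => p.coeff n with ha
  have hsum : ∀ y : ℂ, ‖y‖ < 1 → HasSum (fun k => a k * y ^ k) (f y) := by
    intro y hy
    set s : ℝ := (‖y‖ + 1) / 2 with hs
    have hs0 : 0 < s := by positivity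
    have hs1 : s < 1 := by simp only [hs]; linarith
    have hys : ‖y‖ < s := by simp only [hs]; linarith [norm_nonneg y]
    have h := (hp s.toNNReal (by simpa using hs0)
        (by simpa [Real.coe_toNNReal _ hs0.le] using hs1)).hasSum
      (y := y) (by
        rw [Metric.emetric_ball_nnreal]
        exact mem_ball_zero_iff.2 (by rwa [Real.coe_toNNReal _ hs0.le]))
    simp only [FormalMultilinearSeries.apply_eq_pow_smul_coeff, smul_eq_mul, zero_add] at h
    exact h.congr_fun fun n => by rw [ha]; ring
  have hsummable : ∀ s : ℝ, 0 ≤ s → s < 1 → Summable (fun k => ‖a k‖ * s ^ k) := by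
    intro s hs0 hs1
    have ht'0 : (0:ℝ) < (s+1)/2 := by linarith
    have hrad : (s.toNNReal : ℝ≥0∞) < p.radius := by
      refine lt_of_lt_of_le ?_ (hp ((s+1)/2).toNNReal (by simpa using ht'0)
        (by rw [Real.coe_toNNReal _ ht'0.le]; linarith)).r_le
      rw [ENNReal.coe_lt_coe, ← NNReal.coe_lt_coe, Real.coe_toNNReal _ hs0,
        Real.coe_toNNReal _ ht'0.le]
      linarith
    have hsm := p.summable_norm_mul_pow hrad
    rw [Real.coe_toNNReal _ hs0] at hsm
    apply Summable.of_nonneg_of_le (fun n => by positivity) _ hsm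
    intro n
    have hc : ‖a n‖ ≤ ‖p n‖ := by
      have h := (p n).le_opNorm (fun _ => 1)
      simp only [norm_one, Finset.prod_const_one, mul_one] at h
      exact h
    have hsn : (0:ℝ) ≤ s ^ n := by positivity
    exact mul_le_mul_of_nonneg_right hc hsn
  -- integrability of f on the unit ball
  have hmeas : AEStronglyMeasurable f (volume.restrict (ball (0:ℂ) 1)) :=
    hf.continuousOn.aestronglyMeasurable measurableSet_ball
  have hfint : IntegrableOn f (ball (0:ℂ) 1) := by
    refine Integrable.mono' ((integrableOn_const (C := (1:ℝ)) measure_ball_lt_top.ne).add hL2)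
      hmeas (ae_of_all _ fun w => ?_)
    have h1 : ‖f w‖ ≤ 1 + ‖f w‖^2 := by nlinarith [norm_nonneg (f w), sq_nonneg (‖f w‖ - 1)]
    simp only [Pi.add_apply]
    exact h1
  -- the kernel integrand
  set g : ℂ → ℂ := fun w => f w / (1 - z * (starRingEnd ℂ) w) ^ 2 with hg
  have hden : ∀ w : ℂ, ‖w‖ ≤ 1 → 1 - ‖z‖ ≤ ‖1 - z * (starRingEnd ℂ) w‖ := by
    intro w hw
    have h1 : ‖z * (starRingEnd ℂ) w‖ ≤ ‖z‖ := by
      rw [norm_mul, RCLike.norm_conj]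
      calc ‖z‖ * ‖w‖ ≤ ‖z‖ * 1 := mul_le_mul_of_nonneg_left hw (norm_nonneg z)
        _ = ‖z‖ := mul_one _
    calc 1 - ‖z‖ ≤ ‖(1:ℂ)‖ - ‖z * (starRingEnd ℂ) w‖ := by rw [norm_one]; linarith
      _ ≤ ‖1 - z * (starRingEnd ℂ) w‖ := norm_sub_norm_le _ _
  have hzpos : 0 < 1 - ‖z‖ := by linarith
  have hdenne : ∀ w ∈ ball (0:ℂ) 1, (1 - z * (starRingEnd ℂ) w) ^ 2 ≠ 0 := by
    intro w hw
    apply pow_ne_zero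
    intro h0
    have := hden w (mem_ball_zero_iff.1 hw).le
    rw [h0, norm_zero] at this
    linarith
  have hgc : ContinuousOn g (ball (0:ℂ) 1) := by
    apply hf.continuousOn.div
    · exact ((continuous_const.sub (continuous_const.mul Complex.continuous_conj)).pow 2).continuousOn
    · exact hdenne
  have hgint : IntegrableOn g (ball (0:ℂ) 1) := by
    refine Integrable.mono' (hfint.norm.const_mul (((1-‖z‖)⁻¹)^2))
      (hgc.aestronglyMeasurable measurableSet_ball) ?_
    filter_upwards [ae_restrict_mem measurableSet_ball] with w hw
    have hd := hden w (mem_ball_zero_iff.1 hw).le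
    rw [hg]
    simp only [norm_div, norm_pow]
    have hdpos : 0 < ‖1 - z * (starRingEnd ℂ) w‖ := lt_of_lt_of_le hzpos hd
    rw [div_le_iff₀ (by positivity)]
    calc ‖f w‖ = ((1-‖z‖)⁻¹)^2 * ((1-‖z‖)^2 * ‖f w‖) := by
          rw [← mul_assoc, ← mul_pow, inv_mul_cancel₀ hzpos.ne', one_pow, one_mul]
      _ ≤ ((1-‖z‖)⁻¹)^2 * (‖1 - z * (starRingEnd ℂ) w‖^2 * ‖f w‖) := by gcongr
      _ = ((1-‖z‖)⁻¹)^2 * ‖f w‖ * ‖1 - z * (starRingEnd ℂ) w‖^2 := by ring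
  -- exhausting sequence of radii
  set rr : ℕ → ℝ := fun j => 1 - 1/(j+2) with hrr
  have hrr0 : ∀ j, 0 < rr j := by
    intro j
    have h2 : (2:ℝ) ≤ (j:ℝ)+2 := by linarith [Nat.cast_nonneg (α := ℝ) j]
    have : 1/((j:ℝ)+2) ≤ 1/2 := one_div_le_one_div_of_le (by norm_num) h2
    simp only [hrr]; linarith
  have hrr1 : ∀ j, rr j < 1 := by
    intro j
    have : 0 < 1/((j:ℝ)+2) := by positivity
    simp only [hrr]; linarith
  have hrrmono : Monotone rr := by
    intro i j hij
    simp only [hrr]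
    have h2 : ((i:ℝ)+2) ≤ ((j:ℝ)+2) := by
      have := Nat.cast_le (α := ℝ).2 hij
      linarith
    have := one_div_le_one_div_of_le (by positivity : (0:ℝ) < (i:ℝ)+2) h2
    linarith
  have hrrtend : Tendsto rr atTop (𝓝 1) := by
    have h1 : Tendsto (fun j : ℕ => ((j:ℝ)+2)) atTop atTop :=
      tendsto_atTop_add_const_right _ 2 tendsto_natCast_atTop_atTop
    have h2 : Tendsto (fun j : ℕ => 1/((j:ℝ)+2)) atTop (𝓝 0) := by
      simp only [one_div]; exact h1.inv_tendsto_atTop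
    have h3 := tendsto_const_nhds (x := (1:ℝ)) (f := atTop (α := ℕ)) |>.sub h2
    rw [sub_zero] at h3
    exact h3
  have hunion : (⋃ j, ball (0:ℂ) (rr j)) = ball (0:ℂ) 1 := by
    ext w
    simp only [mem_iUnion, mem_ball_zero_iff]
    constructor
    · rintro ⟨j, hj⟩
      exact lt_trans hj (hrr1 j)
    · intro hw
      set t : ℝ := 1 - ‖w‖ with htdef
      have ht : 0 < t := by simp only [htdef]; linarith
      obtain ⟨j, hj⟩ := exists_nat_gt (1/t)
      refine ⟨j, ?_⟩
      have h1 : 1/t < (j:ℝ) + 2 := by linarith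
      have h2 : 1/((j:ℝ)+2) < t := by
        rw [div_lt_iff₀ (by positivity)]
        rw [div_lt_iff₀ ht] at h1
        linarith
      simp only [hrr]
      simp only [htdef] at h2
      linarith
  have hlim := tendsto_setIntegral_of_monotone (fun j : ℕ => measurableSet_ball)
    (fun i j hij => ball_subset_ball (hrrmono hij)) (hunion ▸ hgint)
  rw [hunion] at hlim
  have heq : ∀ j, ∫ w in ball (0:ℂ) (rr j), g w
      = (Real.pi : ℂ) * ((rr j : ℝ):ℂ)^2 * f (z * ((rr j : ℝ):ℂ)^2) := fun j =>
    ball_integral_eq f a hf.continuousOn hsum hsummable (hrr0 j) (hrr1 j) hz1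
  simp only [heq] at hlim
  have hc : Tendsto (fun j => ((rr j : ℝ):ℂ)) atTop (𝓝 1) := by
    have := (Complex.continuous_ofReal.tendsto 1).comp hrrtend
    rw [Complex.ofReal_one] at this; exact this
  have hfz : Tendsto (fun j => f (z * ((rr j : ℝ):ℂ)^2)) atTop (𝓝 (f z)) := by
    have hzc : Tendsto (fun j => z * ((rr j : ℝ):ℂ)^2) atTop (𝓝 z) := by
      have := (tendsto_const_nhds (x := z) (f := atTop (α := ℕ))).mul ((hc.pow 2))
      simpa using this
    have hfat : ContinuousAt f z := (hf.differentiableAt (isOpen_ball.mem_nhds hz)).continuousAt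
    exact hfat.tendsto.comp hzc
  have hval : Tendsto (fun j => (Real.pi : ℂ) * ((rr j : ℝ):ℂ)^2 * f (z * ((rr j : ℝ):ℂ)^2))
      atTop (𝓝 ((Real.pi : ℂ) * f z)) := by
    have := ((tendsto_const_nhds (x := (Real.pi : ℂ)) (f := atTop (α := ℕ))).mul (hc.pow 2)).mul hfz
    simpa using this
  have hfinal : (Real.pi : ℂ) * f z = ∫ w in ball (0:ℂ) 1, g w :=
    tendsto_nhds_unique hval hlim
  have hpine : (Real.pi : ℂ) ≠ 0 := Complex.ofReal_ne_zero.2 Real.pi_ne_zero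
  rw [hg] at hfinal
  rw [← hfinal]
  field_simp
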